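/- (Theorem 2, noisy recovery.) Fix positive integers m₁, m₂, s₁, s₂. Let L, I₀, K₀, N be finitely supported functions ℤ×ℤ → ℝ with I₀ ≠ 0, K₀ in the simplex S and supported in the m₁×m₂ grid, and set B = I₀⊗K₀ + N with ‖L⊗N‖_F ≤ ε for some ε ≥ 0. Let (κ_i)_{i=1,…,s₁s₂} be an orthonormal basis of the space of functions supported in the s₁×s₂ grid, set σ_i = ‖(L⊗B)⊗κ_i‖_F, assume σ_i > 0 for all i, and let σ_max = max_i σ_i and σ_min = min_i σ_i. Suppose τ > 0 satisfies ‖(L⊗I₀)⊗X‖_F ≥ τ·‖X‖_F for every X supported in the (m₁+s₁−1)×(m₂+s₂−1) grid. Define h(K) = ∑_{i=1}^{s₁s₂} ‖K⊗κ_i‖_F²/σ_i², and let K̂ be any function in the simplex S supported in the m₁×m₂ grid satisfying h(K̂) ≤ h(K) for every K in S supported in the m₁×m₂ grid. Then ‖K₀ − K̂‖_F ≤ √2·(σ_max + (σ_max/σ_min)·√(s₁s₂)·ε) / τ. -/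

import Mathlib

/-- Images, kernels, and filters: finitely supported functions `ℤ × ℤ → ℝ`. -/
abbrev Img := (ℤ × ℤ) →₀ ℝ

/-- Discrete 2D convolution: `(X ⊗ Y)(i,j) = ∑_{(u,v)} X((i,j)-(u,v)) * Y(u,v)`. -/
noncomputable def conv (X Y : Img) : Img :=
  X.sum fun a xa => Y.sum fun b yb => Finsupp.single (a + b) (xa * yb)

/-- Frobenius norm `‖X‖_F = √(∑ X(i,j)²)`. -/
noncomputable def frob (X : Img) : ℝ := Real.sqrt (X.sum fun _ c => c ^ 2)

/-- Inner product `⟨X, Y⟩ = ∑ X(i,j) * Y(i,j)`. -/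
noncomputable def inner2 (X Y : Img) : ℝ := X.sum fun p c => c * Y p

/-- ℓ¹ norm `‖X‖₁ = ∑ |X(i,j)|`. -/
noncomputable def l1 (X : Img) : ℝ := X.sum fun _ c => |c|

/-- The simplex `S` of blur kernels: nonnegative entries summing to one. -/
def InSimplex (K : Img) : Prop := (∀ p, 0 ≤ K p) ∧ (K.sum fun _ c => c) = 1

/-- `X` is supported in the `a × b` grid `{0,…,a-1} × {0,…,b-1}`. -/
def SuppIn (a b : ℕ) (X : Img) : Prop :=
  ∀ p : ℤ × ℤ, ¬(0 ≤ p.1 ∧ p.1 < (a : ℤ) ∧ 0 ≤ p.2 ∧ p.2 < (b : ℤ)) → X p = 0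

open Pointwise

noncomputable def toA (X : Img) : AddMonoidAlgebra ℝ (ℤ×ℤ) := AddMonoidAlgebra.ofCoeff X

lemma conv_eq_mul (X Y : Img) : conv X Y = (toA X * toA Y).coeff := by
  rw [AddMonoidAlgebra.mul_def]; simp [conv, toA, AddMonoidAlgebra.single, AddMonoidAlgebra.coeff_finsuppSum]

lemma toA_mul (X : AddMonoidAlgebra ℝ (ℤ×ℤ)) : toA X.coeff = X := rfl

lemma conv_assoc (X Y Z : Img) : conv (conv X Y) Z = conv X (conv Y Z) := by
  simp only [conv_eq_mul, toA_mul, mul_assoc]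

lemma conv_comm (X Y : Img) : conv X Y = conv Y X := by
  simp only [conv_eq_mul]; rw [mul_comm (toA X) (toA Y)]

lemma conv_support (X Y : Img) : (conv X Y).support ⊆ X.support + Y.support := by
  classical
  rw [conv_eq_mul]; exact AddMonoidAlgebra.support_coeff_mul_subset (toA X) (toA Y)

lemma conv_sub_left (X Y Z : Img) : conv (X - Y) Z = conv X Z - conv Y Z := by
  simp only [conv_eq_mul, show toA (X-Y) = toA X - toA Y from rfl]
  rw [sub_mul (toA X) (toA Y) (toA Z)]; rfl

lemma conv_add_right (X Y Z : Img) : conv X (Y + Z) = conv X Y + conv X Z := by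
  simp only [conv_eq_mul, show toA (Y+Z) = toA Y + toA Z from rfl]
  rw [mul_add (toA X) (toA Y) (toA Z)]; rfl

lemma conv_add_left (X Y Z : Img) : conv (X + Y) Z = conv X Z + conv Y Z := by
  simp only [conv_eq_mul, show toA (X+Y) = toA X + toA Y from rfl]
  rw [add_mul (toA X) (toA Y) (toA Z)]; rfl

lemma inner2_eq_sum (X Y : Img) (s : Finset (ℤ×ℤ)) (h : X.support ⊆ s) :
    inner2 X Y = ∑ p ∈ s, X p * Y p := by
  rw [inner2, Finsupp.sum]
  exact Finset.sum_subset h (fun p _ hp => by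
    rw [Finsupp.notMem_support_iff.mp hp, zero_mul])

lemma inner2_comm (X Y : Img) : inner2 X Y = inner2 Y X := by
  rw [inner2_eq_sum X Y (X.support ∪ Y.support) Finset.subset_union_left,
      inner2_eq_sum Y X (X.support ∪ Y.support) Finset.subset_union_right]
  exact Finset.sum_congr rfl fun p _ => mul_comm _ _

lemma inner2_sub_left (X Y Z : Img) : inner2 (X - Y) Z = inner2 X Z - inner2 Y Z := by
  set s := X.support ∪ Y.support ∪ (X - Y).support with hs
  rw [inner2_eq_sum X Z s (Finset.subset_union_left.trans Finset.subset_union_left),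
      inner2_eq_sum Y Z s (Finset.subset_union_right.trans Finset.subset_union_left),
      inner2_eq_sum (X - Y) Z s Finset.subset_union_right, ← Finset.sum_sub_distrib]
  exact Finset.sum_congr rfl fun p _ => by rw [Finsupp.sub_apply]; ring

lemma inner2_sub_right (X Y Z : Img) : inner2 X (Y - Z) = inner2 X Y - inner2 X Z := by
  rw [inner2_comm, inner2_sub_left, inner2_comm Y X, inner2_comm Z X]

lemma inner2_nonneg {X Y : Img} (hX : ∀ p, 0 ≤ X p) (hY : ∀ p, 0 ≤ Y p) :
    0 ≤ inner2 X Y := by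
  rw [inner2_eq_sum X Y X.support subset_rfl]
  exact Finset.sum_nonneg fun p _ => mul_nonneg (hX p) (hY p)

lemma frob_eq_sqrt_sum (X : Img) (s : Finset (ℤ×ℤ)) (h : X.support ⊆ s) :
    frob X = Real.sqrt (∑ p ∈ s, X p ^ 2) := by
  rw [frob, Finsupp.sum]
  congr 1
  exact Finset.sum_subset h (fun p _ hp => by
    rw [Finsupp.notMem_support_iff.mp hp]; simp)

lemma frob_sq (X : Img) : frob X ^ 2 = inner2 X X := by
  rw [frob_eq_sqrt_sum X X.support subset_rfl, inner2_eq_sum X X X.support subset_rfl,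
      Real.sq_sqrt (Finset.sum_nonneg fun p _ => sq_nonneg _)]
  exact Finset.sum_congr rfl fun p _ => (sq (X p) ▸ rfl)

lemma frob_nonneg (X : Img) : 0 ≤ frob X := Real.sqrt_nonneg _

lemma sqrt_sum_sq_add_le {ι : Type*} (s : Finset ι) (f g : ι → ℝ) :
    Real.sqrt (∑ i ∈ s, (f i + g i) ^ 2) ≤
      Real.sqrt (∑ i ∈ s, f i ^ 2) + Real.sqrt (∑ i ∈ s, g i ^ 2) := by
  have hf : (0:ℝ) ≤ ∑ i ∈ s, f i ^ 2 := Finset.sum_nonneg fun _ _ => sq_nonneg _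
  have hg : (0:ℝ) ≤ ∑ i ∈ s, g i ^ 2 := Finset.sum_nonneg fun _ _ => sq_nonneg _
  have cs := Real.sum_mul_le_sqrt_mul_sqrt s f g
  have key : ∑ i ∈ s, (f i + g i) ^ 2 ≤
      (Real.sqrt (∑ i ∈ s, f i ^ 2) + Real.sqrt (∑ i ∈ s, g i ^ 2)) ^ 2 := by
    have e : ∑ i ∈ s, (f i + g i) ^ 2
        = ∑ i ∈ s, f i ^ 2 + 2 * (∑ i ∈ s, f i * g i) + ∑ i ∈ s, g i ^ 2 := by
      rw [Finset.mul_sum, ← Finset.sum_add_distrib, ← Finset.sum_add_distrib]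
      exact Finset.sum_congr rfl fun i _ => by ring
    rw [e, add_sq, Real.sq_sqrt hf, Real.sq_sqrt hg]
    nlinarith [cs]
  calc Real.sqrt (∑ i ∈ s, (f i + g i) ^ 2)
      ≤ Real.sqrt ((Real.sqrt (∑ i ∈ s, f i ^ 2) + Real.sqrt (∑ i ∈ s, g i ^ 2)) ^ 2) :=
        Real.sqrt_le_sqrt key
    _ = _ := Real.sqrt_sq (by positivity)

lemma frob_sub_le (U V : Img) : frob (U - V) ≤ frob U + frob V := by
  set s := U.support ∪ V.support ∪ (U - V).support with hs
  rw [frob_eq_sqrt_sum U s (Finset.subset_union_left.trans Finset.subset_union_left),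
      frob_eq_sqrt_sum V s (Finset.subset_union_right.trans Finset.subset_union_left),
      frob_eq_sqrt_sum (U-V) s Finset.subset_union_right]
  have h := sqrt_sum_sq_add_le s (fun p => U p) (fun p => - V p)
  simp only [Finsupp.sub_apply]
  have e : ∑ p ∈ s, (U p - V p)^2 = ∑ p ∈ s, (U p + -(V p))^2 :=
    Finset.sum_congr rfl fun p _ => by ring
  rw [e]
  simpa using h

lemma conv_apply_eq_sum (X K : Img) (t : Finset (ℤ×ℤ)) (h : K.support ⊆ t) (p : ℤ×ℤ) :
    conv X K p = ∑ u ∈ t, X (p - u) * K u := by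
  classical
  have h1 : conv X K p = ∑ a ∈ X.support, ∑ b ∈ K.support,
      if a + b = p then X a * K b else 0 := by
    rw [conv_eq_mul, AddMonoidAlgebra.coeff_mul]; rfl
  rw [h1, Finset.sum_comm]
  have h2 : ∀ b ∈ K.support, (∑ a ∈ X.support, if a + b = p then X a * K b else 0)
      = X (p - b) * K b := by
    intro b _
    simp_rw [← eq_sub_iff_add_eq]
    rw [Finset.sum_ite_eq' X.support (p - b) (fun a => X a * K b)]
    split_ifs with hm
    · rfl
    · rw [Finsupp.notMem_support_iff.mp hm, zero_mul]
  rw [Finset.sum_congr rfl h2]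
  exact Finset.sum_subset h (fun u _ hu => by
    rw [Finsupp.notMem_support_iff.mp hu, mul_zero])

noncomputable def grid (a b : ℕ) : Finset (ℤ×ℤ) := Finset.Ico (0:ℤ) a ×ˢ Finset.Ico (0:ℤ) b

lemma grid_card (a b : ℕ) : (grid a b).card = a * b := by
  simp [grid, Finset.card_product]

lemma mem_grid {a b : ℕ} {p : ℤ×ℤ} :
    p ∈ grid a b ↔ (0 ≤ p.1 ∧ p.1 < (a:ℤ)) ∧ (0 ≤ p.2 ∧ p.2 < (b:ℤ)) := by
  simp [grid, Finset.mem_product]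

lemma suppIn_support {a b : ℕ} {X : Img} (h : SuppIn a b X) : X.support ⊆ grid a b := by
  intro p hp
  rw [Finsupp.mem_support_iff] at hp
  rw [mem_grid]
  by_contra hc
  exact hp (h p (by tauto))

lemma suppIn_conv {m₁ m₂ a b : ℕ} {X Y : Img}
    (hX : SuppIn m₁ m₂ X) (hY : SuppIn a b Y) :
    SuppIn (m₁ + a - 1) (m₂ + b - 1) (conv X Y) := by
  intro p hp
  by_contra hc
  have hmem : p ∈ (conv X Y).support := Finsupp.mem_support_iff.mpr hc
  obtain ⟨q, hq, r, hr, rfl⟩ := Finset.mem_add.mp (conv_support X Y hmem)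
  have h1 := mem_grid.mp (suppIn_support hX hq)
  have h2 := mem_grid.mp (suppIn_support hY hr)
  apply hp
  rw [Prod.fst_add, Prod.snd_add]
  obtain ⟨⟨a1, a2⟩, ⟨a3, a4⟩⟩ := h1
  obtain ⟨⟨b1, b2⟩, ⟨b3, b4⟩⟩ := h2
  omega

lemma euclid_inner (s : Finset (ℤ×ℤ)) (x y : EuclideanSpace ℝ {p // p ∈ s}) :
    inner ℝ x y = ∑ u : {p // p ∈ s}, x u * y u := by
  rw [PiLp.inner_apply]
  simp [RCLike.inner_apply]
  exact Finset.sum_congr rfl fun _ _ => mul_comm _ _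

lemma euclid_complete {n : ℕ} (hn : 0 < n) {α : Type} [Fintype α]
    (hcard : Fintype.card α = n) (v : Fin n → EuclideanSpace ℝ α)
    (hv : ∀ i j, inner ℝ (v i) (v j) = if i = j then 1 else 0)
    (x y : EuclideanSpace ℝ α) :
    ∑ i, inner ℝ x (v i) * inner ℝ (v i) y = inner ℝ x y := by
  haveI : Nonempty (Fin n) := Fin.pos_iff_nonempty.mp hn
  have hon : Orthonormal ℝ v := orthonormal_iff_ite.mpr hv
  have card : Fintype.card (Fin n) = Module.finrank ℝ (EuclideanSpace ℝ α) := by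
    simp [finrank_euclideanSpace, hcard]
  let b := basisOfLinearIndependentOfCardEqFinrank hon.linearIndependent card
  have hb : ⇑b = v := coe_basisOfLinearIndependentOfCardEqFinrank ..
  have hob := (b.toOrthonormalBasis (by rwa [hb])).sum_inner_mul_inner x y
  rwa [Module.Basis.coe_toOrthonormalBasis, hb] at hob

lemma parseval (s₁ s₂ : ℕ) (hs₁ : 0 < s₁) (hs₂ : 0 < s₂) (κ : Fin (s₁*s₂) → Img)
    (hκ : ∀ i, (κ i).support ⊆ grid s₁ s₂)
    (hortho : ∀ i j, inner2 (κ i) (κ j) = if i = j then 1 else 0)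
    (X Y : Img) :
    ∑ i, inner2 (conv X (κ i)) (conv Y (κ i)) = ((s₁*s₂ : ℕ) : ℝ) * inner2 X Y := by
  classical
  set G := grid s₁ s₂ with hG
  have hcard : Fintype.card {p // p ∈ G} = s₁ * s₂ := by
    rw [Fintype.card_coe, hG, grid_card]
  let v : Fin (s₁*s₂) → EuclideanSpace ℝ {p // p ∈ G} := fun i => WithLp.toLp 2 (fun u : {p // p ∈ G} => κ i u.val)
  have hv : ∀ i j, inner ℝ (v i) (v j) = if i = j then 1 else 0 := by
    intro i j
    rw [euclid_inner]
    have e : ∑ u : {p // p ∈ G}, v i u * v j u = ∑ u ∈ G, κ i u * κ j u :=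
      Finset.sum_coe_sort G (fun u => κ i u * κ j u)
    rw [e, ← inner2_eq_sum _ _ G (hκ i), hortho]
  have key : ∀ x y : EuclideanSpace ℝ {p // p ∈ G},
      ∑ i, inner ℝ x (v i) * inner ℝ (v i) y = inner ℝ x y :=
    euclid_complete (Nat.mul_pos hs₁ hs₂) hcard v hv
  set P := (X.support ∪ Y.support) + G with hP
  have hsub : ∀ (Z : Img), Z.support ⊆ X.support ∪ Y.support →
      ∀ i, (conv Z (κ i)).support ⊆ P := by
    intro Z hZ i q hq
    obtain ⟨a, ha, b, hb, rfl⟩ := Finset.mem_add.mp (conv_support Z (κ i) hq)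
    exact Finset.mem_add.mpr ⟨a, hZ ha, b, hκ i hb, rfl⟩
  let fX : (ℤ×ℤ) → EuclideanSpace ℝ {p // p ∈ G} := fun p => WithLp.toLp 2 (fun u : {p // p ∈ G} => X (p - u.val))
  let fY : (ℤ×ℤ) → EuclideanSpace ℝ {p // p ∈ G} := fun p => WithLp.toLp 2 (fun u : {p // p ∈ G} => Y (p - u.val))
  have happX : ∀ i p, conv X (κ i) p = inner ℝ (fX p) (v i) := by
    intro i p
    rw [conv_apply_eq_sum X (κ i) G (hκ i) p, euclid_inner]
    exact (Finset.sum_coe_sort G fun u => X (p - u) * κ i u).symm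
  have happY : ∀ i p, conv Y (κ i) p = inner ℝ (v i) (fY p) := by
    intro i p
    rw [conv_apply_eq_sum Y (κ i) G (hκ i) p, euclid_inner]
    rw [← Finset.sum_coe_sort G (fun u => Y (p - u) * κ i u)]
    exact Finset.sum_congr rfl fun u _ => mul_comm _ _
  calc ∑ i, inner2 (conv X (κ i)) (conv Y (κ i))
      = ∑ i, ∑ p ∈ P, conv X (κ i) p * conv Y (κ i) p := by
        exact Finset.sum_congr rfl fun i _ =>
          inner2_eq_sum _ _ P (hsub X Finset.subset_union_left i)
    _ = ∑ p ∈ P, ∑ i, inner ℝ (fX p) (v i) * inner ℝ (v i) (fY p) := by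
        rw [Finset.sum_comm]
        exact Finset.sum_congr rfl fun p _ => Finset.sum_congr rfl fun i _ => by
          rw [happX, happY]
    _ = ∑ p ∈ P, inner ℝ (fX p) (fY p) :=
        Finset.sum_congr rfl fun p _ => key (fX p) (fY p)
    _ = ∑ p ∈ P, ∑ u ∈ G, X (p - u) * Y (p - u) := by
        refine Finset.sum_congr rfl fun p _ => ?_
        rw [euclid_inner]
        exact Finset.sum_coe_sort G fun u => X (p - u) * Y (p - u)
    _ = ∑ u ∈ G, ∑ p ∈ P, X (p - u) * Y (p - u) := Finset.sum_comm
    _ = ∑ u ∈ G, inner2 X Y := by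
        refine Finset.sum_congr rfl fun u hu => ?_
        have hinj : ∀ x ∈ P, ∀ y ∈ P, x - u = y - u → x = y := by
          intro x _ y _ h; simpa using congrArg (· + u) h
        have him := Finset.sum_image (s := P) (g := fun p : ℤ×ℤ => p - u)
          (f := fun q => X q * Y q) hinj
        have h2 : ∑ q ∈ P.image (fun p : ℤ×ℤ => p - u), X q * Y q = inner2 X Y := by
          refine (inner2_eq_sum X Y _ ?_).symm
          intro q hq
          refine Finset.mem_image.mpr ⟨q + u, ?_, by abel⟩
          exact Finset.mem_add.mpr ⟨q, Finset.mem_union_left _ hq, u, hu, rfl⟩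
        exact him.symm.trans h2
    _ = ((s₁*s₂ : ℕ) : ℝ) * inner2 X Y := by
        rw [Finset.sum_const, nsmul_eq_mul, hG, grid_card]

set_option maxHeartbeats 1000000 in
/-- Theorem 2 (noisy recovery): any minimizer `K̂` of the regularizer over the simplex
satisfies `‖K₀ - K̂‖_F ≤ √2 (σ_max + (σ_max/σ_min) √(s₁s₂) ε) / τ`. -/
theorem recovery_noisy (m₁ m₂ s₁ s₂ : ℕ)
    (hm₁ : 0 < m₁) (hm₂ : 0 < m₂) (hs₁ : 0 < s₁) (hs₂ : 0 < s₂)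
    (L I₀ K₀ N B : Img) (hI₀ : I₀ ≠ 0)
    (hK₀ : InSimplex K₀) (hK₀supp : SuppIn m₁ m₂ K₀)
    (hB : B = conv I₀ K₀ + N)
    (ε : ℝ) (hε : 0 ≤ ε) (hN : frob (conv L N) ≤ ε)
    (κ : Fin (s₁ * s₂) → Img) (hκsupp : ∀ i, SuppIn s₁ s₂ (κ i))
    (hortho : ∀ i j, inner2 (κ i) (κ j) = if i = j then 1 else 0)
    (σ : Fin (s₁ * s₂) → ℝ) (hσ : ∀ i, σ i = frob (conv (conv L B) (κ i)))
    (hσpos : ∀ i, 0 < σ i)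
    (σmax : ℝ) (hσmax : IsGreatest (Set.range σ) σmax)
    (σmin : ℝ) (hσmin : IsLeast (Set.range σ) σmin)
    (τ : ℝ) (hτ : 0 < τ)
    (hsharp : ∀ X : Img, SuppIn (m₁ + s₁ - 1) (m₂ + s₂ - 1) X →
      τ * frob X ≤ frob (conv (conv L I₀) X))
    (Khat : Img) (hKhat : InSimplex Khat) (hKhatsupp : SuppIn m₁ m₂ Khat)
    (hmin : ∀ K : Img, InSimplex K → SuppIn m₁ m₂ K →
      ∑ i, frob (conv Khat (κ i)) ^ 2 / (σ i) ^ 2 ≤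
        ∑ i, frob (conv K (κ i)) ^ 2 / (σ i) ^ 2) :
    frob (K₀ - Khat) ≤
      Real.sqrt 2 * (σmax + (σmax / σmin) * Real.sqrt ((s₁ : ℝ) * (s₂ : ℝ)) * ε) / τ := by
    classical
  have hn : 0 < s₁ * s₂ := Nat.mul_pos hs₁ hs₂
  set R : ℝ := ((s₁ * s₂ : ℕ) : ℝ) with hR
  have hRpos : (0:ℝ) < R := by rw [hR]; exact_mod_cast hn
  have hR1 : (1:ℝ) ≤ R := by rw [hR]; exact_mod_cast hn
  have κG : ∀ i, (κ i).support ⊆ grid s₁ s₂ := fun i => suppIn_support (hκsupp i)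
  have parse2 : ∀ X : Img, ∑ i, frob (conv X (κ i)) ^ 2 = R * frob X ^ 2 := by
    intro X
    calc ∑ i, frob (conv X (κ i)) ^ 2
        = ∑ i, inner2 (conv X (κ i)) (conv X (κ i)) :=
          Finset.sum_congr rfl fun i _ => frob_sq _
      _ = R * inner2 X X := parseval s₁ s₂ hs₁ hs₂ κ κG hortho X X
      _ = R * frob X ^ 2 := by rw [frob_sq]
  obtain ⟨i₀, hi₀⟩ := hσmax.1
  have hσmaxpos : 0 < σmax := hi₀ ▸ hσpos i₀
  obtain ⟨i₁, hi₁⟩ := hσmin.1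
  have hσminpos : 0 < σmin := hi₁ ▸ hσpos i₁
  have hσle : ∀ i, σ i ≤ σmax := fun i => hσmax.2 ⟨i, rfl⟩
  have hσge : ∀ i, σmin ≤ σ i := fun i => hσmin.2 ⟨i, rfl⟩
  have hmm : σmin ≤ σmax := hi₁ ▸ hσle i₁
  have hepos : ∀ i, (0:ℝ) ≤ frob (conv (conv L N) (κ i)) := fun i => frob_nonneg _
  have ha : ∀ i, (0:ℝ) ≤ frob (conv K₀ (κ i)) := fun i => frob_nonneg _
  have hb' : ∀ i, (0:ℝ) ≤ frob (conv Khat (κ i)) := fun i => frob_nonneg _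
  -- key per-index bound
  have h1 : ∀ i, τ * frob (conv K₀ (κ i)) ≤ σ i + frob (conv (conv L N) (κ i)) := by
    intro i
    have hsupp := suppIn_conv hK₀supp (hκsupp i)
    have hs := hsharp _ hsupp
    have hidd : conv (conv L I₀) (conv K₀ (κ i))
        = conv (conv L B) (κ i) - conv (conv L N) (κ i) := by
      rw [hB, conv_add_right L (conv I₀ K₀) N, conv_add_left,
          ← conv_assoc L I₀ K₀, conv_assoc (conv L I₀) K₀ (κ i)]
      abel
    calc τ * frob (conv K₀ (κ i))
        ≤ frob (conv (conv L I₀) (conv K₀ (κ i))) := hs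
      _ = frob (conv (conv L B) (κ i) - conv (conv L N) (κ i)) := by rw [hidd]
      _ ≤ frob (conv (conv L B) (κ i)) + frob (conv (conv L N) (κ i)) := frob_sub_le _ _
      _ = σ i + frob (conv (conv L N) (κ i)) := by rw [hσ i]
  have sum_const : ∀ c : ℝ, ∑ _i : Fin (s₁*s₂), c = R * c := by
    intro c
    rw [Finset.sum_const, Finset.card_univ, Fintype.card_fin, nsmul_eq_mul, hR]
  -- noise bounds
  have h2 : ∑ i, frob (conv (conv L N) (κ i)) ^ 2 ≤ R * ε ^ 2 := by
    have hp := parse2 (conv L N)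
    have hq : frob (conv L N) ^ 2 ≤ ε ^ 2 := pow_le_pow_left₀ (frob_nonneg _) hN 2
    calc ∑ i, frob (conv (conv L N) (κ i)) ^ 2 = R * frob (conv L N)^2 := hp
      _ ≤ R * ε^2 := mul_le_mul_of_nonneg_left hq (le_of_lt hRpos)
  have hσ2 : ∑ i, σ i ^ 2 ≤ R * σmax ^ 2 := by
    calc ∑ i, σ i^2 ≤ ∑ _i : Fin (s₁*s₂), σmax^2 :=
          Finset.sum_le_sum fun i _ => pow_le_pow_left₀ (le_of_lt (hσpos i)) (hσle i) 2
      _ = R * σmax^2 := sum_const _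
  have sqrt_bound : ∀ (f : Fin (s₁*s₂) → ℝ) (c : ℝ), 0 ≤ c → (∑ i, f i ^2) ≤ R * c^2 →
      Real.sqrt (∑ i, f i^2) ≤ Real.sqrt R * c := by
    intro f c hc hle
    calc Real.sqrt (∑ i, f i^2) ≤ Real.sqrt (R * c^2) := Real.sqrt_le_sqrt hle
      _ = Real.sqrt R * c := by rw [Real.sqrt_mul (le_of_lt hRpos), Real.sqrt_sq hc]
  have hs2 : Real.sqrt R * Real.sqrt R = R := Real.mul_self_sqrt (le_of_lt hRpos)
  have cs1 : ∑ i, σ i * frob (conv (conv L N) (κ i)) ≤ R * (σmax * ε) := by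
    have hcs := Real.sum_mul_le_sqrt_mul_sqrt Finset.univ σ
      (fun i => frob (conv (conv L N) (κ i)))
    have b1 := sqrt_bound σ σmax (le_of_lt hσmaxpos) hσ2
    have b2 := sqrt_bound (fun i => frob (conv (conv L N) (κ i))) ε hε h2
    have m1 : Real.sqrt (∑ i, σ i^2) * Real.sqrt (∑ i, frob (conv (conv L N) (κ i))^2)
        ≤ (Real.sqrt R * σmax) * (Real.sqrt R * ε) :=
      mul_le_mul b1 b2 (Real.sqrt_nonneg _)
        (mul_nonneg (Real.sqrt_nonneg R) (le_of_lt hσmaxpos))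
    have m2 : (Real.sqrt R * σmax) * (Real.sqrt R * ε) = R * (σmax * ε) := by
      rw [show (Real.sqrt R * σmax) * (Real.sqrt R * ε)
          = (Real.sqrt R * Real.sqrt R) * (σmax * ε) from by ring, hs2]
    calc ∑ i, σ i * frob (conv (conv L N) (κ i)) ≤ _ := hcs
      _ ≤ R * (σmax * ε) := m2 ▸ m1
  have cs2 : ∑ i, frob (conv (conv L N) (κ i)) ≤ R * ε := by
    have hcs := Real.sum_mul_le_sqrt_mul_sqrt Finset.univ (fun _ => (1:ℝ))
      (fun i => frob (conv (conv L N) (κ i)))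
    have b2 := sqrt_bound (fun i => frob (conv (conv L N) (κ i))) ε hε h2
    have e1 : ∑ _i : Fin (s₁*s₂), ((1:ℝ))^2 = R := by rw [sum_const]; ring
    have b1 : Real.sqrt (∑ _i : Fin (s₁*s₂), ((1:ℝ))^2) = Real.sqrt R := by rw [e1]
    have m1 : Real.sqrt (∑ _i : Fin (s₁*s₂), ((1:ℝ))^2)
          * Real.sqrt (∑ i, frob (conv (conv L N) (κ i))^2)
        ≤ Real.sqrt R * (Real.sqrt R * ε) := by
      rw [b1]
      exact mul_le_mul_of_nonneg_left b2 (Real.sqrt_nonneg R)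
    have m2 : Real.sqrt R * (Real.sqrt R * ε) = R * ε := by
      rw [show Real.sqrt R * (Real.sqrt R * ε)
          = (Real.sqrt R * Real.sqrt R) * ε from by ring, hs2]
    calc ∑ i, frob (conv (conv L N) (κ i))
        = ∑ i, (1:ℝ) * frob (conv (conv L N) (κ i)) := by
          exact Finset.sum_congr rfl fun i _ => (one_mul _).symm
      _ ≤ _ := hcs
      _ ≤ R * ε := by rw [← m2]; exact m1
  -- expand (σ+e)²
  have expand1 : ∑ i, (σ i + frob (conv (conv L N) (κ i)))^2
      = ∑ i, σ i^2 + 2*(∑ i, σ i * frob (conv (conv L N) (κ i)))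
        + ∑ i, frob (conv (conv L N) (κ i))^2 := by
    rw [Finset.mul_sum, ← Finset.sum_add_distrib, ← Finset.sum_add_distrib]
    exact Finset.sum_congr rfl fun i _ => by ring
  have hA : τ^2 * ∑ i, frob (conv K₀ (κ i))^2 ≤ R * (σmax + ε)^2 := by
    have step : ∑ i, (τ * frob (conv K₀ (κ i)))^2
        ≤ ∑ i, (σ i + frob (conv (conv L N) (κ i)))^2 :=
      Finset.sum_le_sum fun i _ =>
        pow_le_pow_left₀ (mul_nonneg (le_of_lt hτ) (ha i)) (h1 i) 2
    have lhs_eq : ∑ i, (τ * frob (conv K₀ (κ i)))^2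
        = τ^2 * ∑ i, frob (conv K₀ (κ i))^2 := by
      rw [Finset.mul_sum]; exact Finset.sum_congr rfl fun i _ => by ring
    nlinarith [step, lhs_eq, expand1, hσ2, cs1, h2]
  have key2 : ∀ i, τ^2 * (frob (conv K₀ (κ i))^2 / σ i^2)
      ≤ (1 + frob (conv (conv L N) (κ i))/σmin)^2 := by
    intro i
    have hσi := hσpos i
    have k2 : (τ * frob (conv K₀ (κ i)))^2 ≤ (σ i + frob (conv (conv L N) (κ i)))^2 :=
      pow_le_pow_left₀ (mul_nonneg (le_of_lt hτ) (ha i)) (h1 i) 2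
    have k3 : (σ i + frob (conv (conv L N) (κ i)))/σ i
        ≤ 1 + frob (conv (conv L N) (κ i))/σmin := by
      have hd : frob (conv (conv L N) (κ i))/σ i ≤ frob (conv (conv L N) (κ i))/σmin := by
        rw [div_le_div_iff₀ hσi hσminpos]
        exact mul_le_mul_of_nonneg_left (hσge i) (hepos i)
      have e0 : (σ i + frob (conv (conv L N) (κ i)))/σ i
          = 1 + frob (conv (conv L N) (κ i))/σ i := by
        field_simp
      rw [e0]; linarith
    have k3nn : 0 ≤ (σ i + frob (conv (conv L N) (κ i)))/σ i :=
      div_nonneg (by linarith [hepos i]) (le_of_lt hσi)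
    have k4 : ((σ i + frob (conv (conv L N) (κ i)))/σ i)^2
        ≤ (1 + frob (conv (conv L N) (κ i))/σmin)^2 := pow_le_pow_left₀ k3nn k3 2
    have k5 : τ^2 * (frob (conv K₀ (κ i))^2 / σ i^2)
        = (τ*frob (conv K₀ (κ i)))^2/σ i^2 := by ring
    have k6 : (τ*frob (conv K₀ (κ i)))^2/σ i^2
        ≤ (σ i + frob (conv (conv L N) (κ i)))^2/σ i^2 :=
      (div_le_div_iff_of_pos_right (pow_pos hσi 2)).mpr k2
    have k7 : (σ i + frob (conv (conv L N) (κ i)))^2/σ i^2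
        = ((σ i + frob (conv (conv L N) (κ i)))/σ i)^2 := (div_pow _ _ 2).symm
    rw [k5]
    calc (τ*frob (conv K₀ (κ i)))^2/σ i^2
        ≤ (σ i + frob (conv (conv L N) (κ i)))^2/σ i^2 := k6
      _ = ((σ i + frob (conv (conv L N) (κ i)))/σ i)^2 := k7
      _ ≤ _ := k4
  have hb2 : ∑ i, frob (conv Khat (κ i))^2
      ≤ σmax^2 * ∑ i, frob (conv Khat (κ i))^2/σ i^2 := by
    rw [Finset.mul_sum]
    refine Finset.sum_le_sum fun i _ => ?_
    have hσi := hσpos i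
    have e0 : frob (conv Khat (κ i))^2/σ i^2 * σ i^2 = frob (conv Khat (κ i))^2 :=
      div_mul_cancel₀ _ (ne_of_gt (pow_pos hσi 2))
    have e1 : frob (conv Khat (κ i))^2/σ i^2 * σ i^2
        ≤ frob (conv Khat (κ i))^2/σ i^2 * σmax^2 :=
      mul_le_mul_of_nonneg_left (pow_le_pow_left₀ (le_of_lt hσi) (hσle i) 2)
        (div_nonneg (sq_nonneg _) (sq_nonneg _))
    calc frob (conv Khat (κ i))^2 = _ := e0.symm
      _ ≤ frob (conv Khat (κ i))^2/σ i^2 * σmax^2 := e1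
      _ = σmax^2 * (frob (conv Khat (κ i))^2/σ i^2) := mul_comm _ _
  have expand2 : ∑ i, (1 + frob (conv (conv L N) (κ i))/σmin)^2
      = R + (2/σmin)*(∑ i, frob (conv (conv L N) (κ i)))
        + (1/σmin^2)*(∑ i, frob (conv (conv L N) (κ i))^2) := by
    have e0 : ∀ i : Fin (s₁*s₂), (1 + frob (conv (conv L N) (κ i))/σmin)^2
        = 1 + (2/σmin)*frob (conv (conv L N) (κ i))
          + (1/σmin^2)*frob (conv (conv L N) (κ i))^2 := by
      intro i; field_simp; ring
    rw [Finset.sum_congr rfl (fun i _ => e0 i), Finset.sum_add_distrib,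
        Finset.sum_add_distrib, ← Finset.mul_sum, ← Finset.mul_sum, sum_const, mul_one]
  have hBb : τ^2 * ∑ i, frob (conv Khat (κ i))^2 ≤ R * (σmax + σmax/σmin*ε)^2 := by
    have hmin0 := hmin K₀ hK₀ hK₀supp
    have t1 : τ^2 * ∑ i, frob (conv Khat (κ i))^2/σ i^2
        ≤ τ^2 * ∑ i, frob (conv K₀ (κ i))^2/σ i^2 :=
      mul_le_mul_of_nonneg_left hmin0 (sq_nonneg τ)
    have t2 : τ^2 * ∑ i, frob (conv K₀ (κ i))^2/σ i^2
        ≤ ∑ i, (1 + frob (conv (conv L N) (κ i))/σmin)^2 := by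
      rw [Finset.mul_sum]; exact Finset.sum_le_sum fun i _ => key2 i
    have t3 : ∑ i, (1 + frob (conv (conv L N) (κ i))/σmin)^2 ≤ R * (1+ε/σmin)^2 := by
      rw [expand2]
      have u1 : (2/σmin)*(∑ i, frob (conv (conv L N) (κ i))) ≤ (2/σmin)*(R*ε) :=
        mul_le_mul_of_nonneg_left cs2 (by positivity)
      have u2 : (1/σmin^2)*(∑ i, frob (conv (conv L N) (κ i))^2) ≤ (1/σmin^2)*(R*ε^2) :=
        mul_le_mul_of_nonneg_left h2 (by positivity)
      have u3 : R*(1+ε/σmin)^2 = R + (2/σmin)*(R*ε) + (1/σmin^2)*(R*ε^2) := by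
        field_simp; ring
      linarith
    have t4 : τ^2 * ∑ i, frob (conv Khat (κ i))^2
        ≤ σmax^2 * (τ^2 * ∑ i, frob (conv Khat (κ i))^2/σ i^2) := by
      calc τ^2 * ∑ i, frob (conv Khat (κ i))^2
          ≤ τ^2 * (σmax^2 * ∑ i, frob (conv Khat (κ i))^2/σ i^2) :=
            mul_le_mul_of_nonneg_left hb2 (sq_nonneg τ)
        _ = σmax^2 * (τ^2 * ∑ i, frob (conv Khat (κ i))^2/σ i^2) := by ring
    have t5 : σmax^2 * (τ^2 * ∑ i, frob (conv Khat (κ i))^2/σ i^2)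
        ≤ σmax^2 * (R*(1+ε/σmin)^2) :=
      mul_le_mul_of_nonneg_left ((t1.trans t2).trans t3) (sq_nonneg σmax)
    have t7 : σmax^2*(R*(1+ε/σmin)^2) = R*(σmax + σmax/σmin*ε)^2 := by
      field_simp
    linarith
  have hnn0 : 0 ≤ inner2 K₀ Khat := inner2_nonneg hK₀.1 hKhat.1
  have eΔ : inner2 (K₀ - Khat) (K₀ - Khat)
      = inner2 K₀ K₀ - 2*inner2 K₀ Khat + inner2 Khat Khat := by
    rw [inner2_sub_left, inner2_sub_right, inner2_sub_right, inner2_comm Khat K₀]; ring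
  have pa : ∑ i, frob (conv K₀ (κ i))^2 = R * inner2 K₀ K₀ := by
    rw [parse2, frob_sq]
  have pb : ∑ i, frob (conv Khat (κ i))^2 = R * inner2 Khat Khat := by
    rw [parse2, frob_sq]
  have h5 : R * frob (K₀ - Khat)^2
      ≤ ∑ i, frob (conv K₀ (κ i))^2 + ∑ i, frob (conv Khat (κ i))^2 := by
    rw [frob_sq, eΔ, pa, pb]
    nlinarith [mul_nonneg (le_of_lt hRpos) hnn0]
  have hsqR : (1:ℝ) ≤ Real.sqrt R := by
    rw [show (1:ℝ) = Real.sqrt 1 from (Real.sqrt_one).symm]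
    exact Real.sqrt_le_sqrt hR1
  set C : ℝ := σmax + σmax/σmin * Real.sqrt R * ε with hC
  have hd1 : 1 ≤ σmax/σmin := (one_le_div hσminpos).mpr hmm
  have hd0 : (0:ℝ) ≤ σmax/σmin := le_trans zero_le_one hd1
  have hC1 : σmax + ε ≤ C := by
    rw [hC]
    have h11 : 1 ≤ σmax/σmin * Real.sqrt R := by nlinarith [hd1, hsqR]
    have key : ε ≤ σmax/σmin * Real.sqrt R * ε := by
      calc ε = 1 * ε := (one_mul ε).symm
        _ ≤ σmax/σmin * Real.sqrt R * ε := mul_le_mul_of_nonneg_right h11 hε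
    linarith
  have hC2 : σmax + σmax/σmin*ε ≤ C := by
    rw [hC]
    have key : σmax/σmin*ε ≤ σmax/σmin*Real.sqrt R*ε :=
      mul_le_mul_of_nonneg_right (le_mul_of_one_le_right hd0 hsqR) hε
    linarith
  have hCnn : 0 ≤ C := by
    rw [hC]
    have : 0 ≤ σmax/σmin*Real.sqrt R*ε :=
      mul_nonneg (mul_nonneg (div_nonneg (le_of_lt hσmaxpos) (le_of_lt hσminpos))
        (Real.sqrt_nonneg R)) hε
    linarith [hσmaxpos]
  have final1 : τ^2 * frob (K₀-Khat)^2 ≤ 2*C^2 := by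
    have s1 : (σmax+ε)^2 ≤ C^2 := pow_le_pow_left₀ (by linarith [hσmaxpos]) hC1 2
    have s2 : (σmax + σmax/σmin*ε)^2 ≤ C^2 := by
      refine pow_le_pow_left₀ ?_ hC2 2
      have : 0 ≤ σmax/σmin*ε := mul_nonneg (by positivity) hε
      linarith [hσmaxpos]
    have l1 : τ^2*(R * frob (K₀-Khat)^2)
        ≤ τ^2*(∑ i, frob (conv K₀ (κ i))^2 + ∑ i, frob (conv Khat (κ i))^2) :=
      mul_le_mul_of_nonneg_left h5 (sq_nonneg τ)
    have r1 : R*(σmax+ε)^2 ≤ R*C^2 := mul_le_mul_of_nonneg_left s1 (le_of_lt hRpos)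
    have r2 : R*(σmax+σmax/σmin*ε)^2 ≤ R*C^2 :=
      mul_le_mul_of_nonneg_left s2 (le_of_lt hRpos)
    have m : R*(τ^2*frob (K₀-Khat)^2) ≤ R*(2*C^2) := by
      calc R*(τ^2*frob (K₀-Khat)^2)
          = τ^2*(R * frob (K₀-Khat)^2) := by ring
        _ ≤ τ^2*(∑ i, frob (conv K₀ (κ i))^2 + ∑ i, frob (conv Khat (κ i))^2) := l1
        _ = τ^2*∑ i, frob (conv K₀ (κ i))^2 + τ^2*∑ i, frob (conv Khat (κ i))^2 := by
            ring
        _ ≤ R*(σmax+ε)^2 + R*(σmax+σmax/σmin*ε)^2 := add_le_add hA hBb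
        _ ≤ R*C^2 + R*C^2 := add_le_add r1 r2
        _ = R*(2*C^2) := by ring
    exact (mul_le_mul_iff_of_pos_left hRpos).mp m
  have hRHSnn : 0 ≤ Real.sqrt 2 * C / τ :=
    div_nonneg (mul_nonneg (Real.sqrt_nonneg 2) hCnn) (le_of_lt hτ)
  have goal2 : frob (K₀-Khat)^2 ≤ (Real.sqrt 2 * C / τ)^2 := by
    rw [div_pow, mul_pow, Real.sq_sqrt (by norm_num : (0:ℝ) ≤ 2),
        le_div_iff₀ (pow_pos hτ 2)]
    nlinarith [final1]
  have hfin := Real.sqrt_le_sqrt goal2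
  rw [Real.sqrt_sq (frob_nonneg _), Real.sqrt_sq hRHSnn] at hfin
  have hcast : Real.sqrt ((s₁:ℝ)*(s₂:ℝ)) = Real.sqrt R := by
    rw [hR]; push_cast; ring_nf
  rw [hcast]
  rw [hC] at hfin
  exact hfin
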